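/- arXiv:2304.14074 — 2 statements merged into one kernel-verified Lean document; each statement's English description precedes it below -/
import Mathlib

section
/- With D_h the m×m discrete Laplacian and P_3 = (I − 3ΔT·D_h + ε²ΔT·D_h²)⁻¹(I − 3ΔT·D_h), for every natural number q the coarse propagator 𝒢(U) = P_3^q·U satisfies the growth condition ‖P_3^q·U‖ ≤ ‖U‖ for every U ∈ ℝ^m. -/
/-- The m×m discrete Dirichlet Laplacian with mesh size `h`. -/
noncomputable def Dh (m : ℕ) (h : ℝ) : Matrix (Fin m) (Fin m) ℝ :=
  Matrix.of fun i j =>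
    if (i : ℕ) = (j : ℕ) then 1 / h ^ 2 * (-2)
    else if (i : ℕ) + 1 = (j : ℕ) ∨ (j : ℕ) + 1 = (i : ℕ) then 1 / h ^ 2 * 1
    else 0

/-- `Pmat m h ΔT ε i = (I − iΔT·D_h + ε²ΔT·D_h²)⁻¹ (I − iΔT·D_h)`. -/
noncomputable def Pmat (m : ℕ) (h ΔT ε : ℝ) (i : ℕ) : Matrix (Fin m) (Fin m) ℝ :=
  ((1 : Matrix (Fin m) (Fin m) ℝ) - ((i : ℝ) * ΔT) • Dh m h
      + (ε ^ 2 * ΔT) • Dh m h ^ 2)⁻¹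
    * ((1 : Matrix (Fin m) (Fin m) ℝ) - ((i : ℝ) * ΔT) • Dh m h)

/-- `PJmat m h ΔT ε J i = [(I − (iΔT/J)·D_h + ε²(ΔT/J)·D_h²)⁻¹ (I − (iΔT/J)·D_h)]^J`. -/
noncomputable def PJmat (m : ℕ) (h ΔT ε : ℝ) (J i : ℕ) : Matrix (Fin m) (Fin m) ℝ :=
  (((1 : Matrix (Fin m) (Fin m) ℝ) - ((i : ℝ) * ΔT / (J : ℝ)) • Dh m h
      + (ε ^ 2 * (ΔT / (J : ℝ))) • Dh m h ^ 2)⁻¹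
    * ((1 : Matrix (Fin m) (Fin m) ℝ) - ((i : ℝ) * ΔT / (J : ℝ)) • Dh m h)) ^ J

/-- The action of a matrix on `EuclideanSpace ℝ (Fin m)` (i.e. `ℝ^m` with the
Euclidean norm), given by matrix-vector multiplication. -/
noncomputable def act {m : ℕ} (A : Matrix (Fin m) (Fin m) ℝ)
    (U : EuclideanSpace ℝ (Fin m)) : EuclideanSpace ℝ (Fin m) :=
  Matrix.toEuclideanCLM (𝕜 := ℝ) A U

/-- The operator (spectral) norm of a matrix, induced by the Euclidean norm. -/
noncomputable def opNorm {m : ℕ} (A : Matrix (Fin m) (Fin m) ℝ) : ℝ :=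
  ‖Matrix.toEuclideanCLM (𝕜 := ℝ) A‖

open Matrix in
/-- difference matrix -/
noncomputable def Bdiff (m : ℕ) : Matrix (Fin (m+1)) (Fin m) ℝ :=
  Matrix.of fun k j =>
    (if (j : ℕ) = (k : ℕ) then 1 else 0) - (if (j : ℕ) + 1 = (k : ℕ) then 1 else 0)

open Matrix
lemma Bdiff_factor (m : ℕ) (i j : Fin m) :
    ((Bdiff m)ᵀ * Bdiff m) i j =
      if (i : ℕ) = (j : ℕ) then 2
      else if (i : ℕ) + 1 = (j : ℕ) ∨ (j : ℕ) + 1 = (i : ℕ) then -1 else 0 := by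
  rw [Matrix.mul_apply]
  simp only [Matrix.transpose_apply, Bdiff, Matrix.of_apply]
  rw [Fin.sum_univ_eq_sum_range
    (fun k => ((if (i : ℕ) = k then (1:ℝ) else 0) - (if (i : ℕ) + 1 = k then 1 else 0)) *
      ((if (j : ℕ) = k then 1 else 0) - (if (j : ℕ) + 1 = k then 1 else 0)))]
  simp only [sub_mul, mul_sub, ite_mul, one_mul, zero_mul, mul_ite, mul_one, mul_zero]
  simp only [Finset.sum_ite_eq, Finset.sum_ite_eq', Finset.mem_range, Finset.sum_sub_distrib]
  have hi := i.isLt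
  have hj := j.isLt
  split_ifs <;> first | omega | norm_num

lemma Dh_eq (m : ℕ) (h : ℝ) :
    Dh m h = (-(1 / h ^ 2)) • ((Bdiff m)ᵀ * Bdiff m) := by
  ext i j
  rw [Matrix.smul_apply, Bdiff_factor]
  simp only [Dh, Matrix.of_apply]
  split_ifs <;> simp [smul_eq_mul] <;> ring

lemma Dh_symm (m : ℕ) (h : ℝ) : (Dh m h)ᵀ = Dh m h := by
  ext i j
  simp only [Dh, Matrix.transpose_apply, Matrix.of_apply]
  split_ifs <;> first | rfl | omega | tauto

lemma Dh_neg (m : ℕ) (h : ℝ) (x : Fin m → ℝ) :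
    x ⬝ᵥ (Dh m h *ᵥ x) ≤ 0 := by
  rw [Dh_eq]
  rw [Matrix.smul_mulVec, dotProduct_smul, ← Matrix.mulVec_mulVec,
    Matrix.dotProduct_mulVec, Matrix.vecMul_transpose]
  have h1 : (0:ℝ) ≤ (Bdiff m *ᵥ x) ⬝ᵥ (Bdiff m *ᵥ x) := by
    apply Finset.sum_nonneg
    intro k _
    exact mul_self_nonneg _
  have h2 : (0:ℝ) ≤ 1 / h ^ 2 := by positivity
  rw [smul_eq_mul]
  nlinarith

lemma dot_mulVec_symm (m : ℕ) (h : ℝ) (x y : Fin m → ℝ) :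
    x ⬝ᵥ (Dh m h *ᵥ y) = (Dh m h *ᵥ x) ⬝ᵥ y := by
  rw [Matrix.dotProduct_mulVec, ← Matrix.vecMul_transpose, Dh_symm,
    ← Matrix.mulVec_transpose, Dh_symm]

section main
variable {m : ℕ} {h a b : ℝ}

lemma dot_self_nonneg {m : ℕ} (x : Fin m → ℝ) : 0 ≤ x ⬝ᵥ x :=
  Finset.sum_nonneg fun i _ => mul_self_nonneg _

lemma B_posdef (m : ℕ) (h : ℝ) (ha : 0 ≤ a) (hb : 0 ≤ b) :
    ((1 : Matrix (Fin m) (Fin m) ℝ) - a • Dh m h + b • Dh m h ^ 2).PosDef := by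
  rw [Matrix.posDef_iff_dotProduct_mulVec]
  constructor
  · show _ᴴ = _
    have hsym : ∀ M : Matrix (Fin m) (Fin m) ℝ, Mᴴ = Mᵀ := fun M => by
      ext i j; simp [Matrix.conjTranspose_apply]
    rw [hsym]
    simp [Matrix.transpose_add, Matrix.transpose_sub, Matrix.transpose_smul,
      Matrix.transpose_pow, Dh_symm m h]
  · intro x hx
    have hstar : star x = x := by
      ext i; simp
    rw [hstar]
    set D := Dh m h with hD
    have hexp : x ⬝ᵥ (((1 : Matrix (Fin m) (Fin m) ℝ) - a • D + b • D ^ 2) *ᵥ x)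
        = x ⬝ᵥ x - a * (x ⬝ᵥ (D *ᵥ x)) + b * ((D *ᵥ x) ⬝ᵥ (D *ᵥ x)) := by
      rw [Matrix.add_mulVec, Matrix.sub_mulVec, Matrix.one_mulVec,
        Matrix.smul_mulVec, Matrix.smul_mulVec,
        pow_two, ← Matrix.mulVec_mulVec]
      rw [dotProduct_add, dotProduct_sub, dotProduct_smul,
        dotProduct_smul, dot_mulVec_symm m h x (D *ᵥ x), smul_eq_mul, smul_eq_mul]
    rw [hexp]
    have h1 : 0 < x ⬝ᵥ x := by
      rcases lt_or_eq_of_le (dot_self_nonneg x) with h' | h'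
      · exact h'
      · exact absurd (dotProduct_self_eq_zero.mp h'.symm) hx
    have h2 := Dh_neg m h x
    have h3 : (0:ℝ) ≤ (D *ᵥ x) ⬝ᵥ (D *ᵥ x) := dot_self_nonneg _
    nlinarith [mul_nonneg ha (neg_nonneg.mpr h2), mul_nonneg hb h3]

lemma key_dot (m : ℕ) (h : ℝ) (ha : 0 ≤ a) (hb : 0 ≤ b) (x : Fin m → ℝ) :
    let D := Dh m h
    let A := (1 : Matrix (Fin m) (Fin m) ℝ) - a • D
    let B := (1 : Matrix (Fin m) (Fin m) ℝ) - a • D + b • D ^ 2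
    ((B⁻¹ * A) *ᵥ x) ⬝ᵥ ((B⁻¹ * A) *ᵥ x) ≤ x ⬝ᵥ x := by
  intro D A B
  have hBpd := B_posdef m h ha hb
  have hBu : IsUnit B.det := (Matrix.isUnit_iff_isUnit_det B).mp hBpd.isUnit
  have hAB : Commute A B := by
    have hD2 : Commute A (D ^ 2) :=
      ((Commute.one_left (D ^ 2)).sub_left (((Commute.refl D).pow_right 2).smul_left a))
    exact (Commute.refl A).add_right (hD2.smul_right b)
  set y := B⁻¹ *ᵥ x with hy
  have hx : B *ᵥ y = x := by
    rw [hy, Matrix.mulVec_mulVec, Matrix.mul_nonsing_inv B hBu, Matrix.one_mulVec]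
  have hPx : (B⁻¹ * A) *ᵥ x = A *ᵥ y := by
    rw [← hx, Matrix.mulVec_mulVec, mul_assoc, hAB.eq, ← mul_assoc,
      Matrix.nonsing_inv_mul B hBu, one_mul]
  rw [hPx, ← hx]
  set w := D *ᵥ y with hw
  set v := D *ᵥ w with hv
  have hAy : A *ᵥ y = y - a • w := by
    rw [Matrix.sub_mulVec, Matrix.one_mulVec, Matrix.smul_mulVec]
  have hBy : B *ᵥ y = y - a • w + b • v := by
    rw [Matrix.add_mulVec, Matrix.sub_mulVec, Matrix.one_mulVec,
      Matrix.smul_mulVec, Matrix.smul_mulVec, pow_two,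
      ← Matrix.mulVec_mulVec]
  rw [hAy, hBy]
  have f1 : w ⬝ᵥ v ≤ 0 := Dh_neg m h w
  have f2 : y ⬝ᵥ v = w ⬝ᵥ w := by rw [hv, dot_mulVec_symm]
  have f4 : v ⬝ᵥ y = w ⬝ᵥ w := by rw [dotProduct_comm, f2]
  have f5 : v ⬝ᵥ w = w ⬝ᵥ v := dotProduct_comm v w
  have f6 : w ⬝ᵥ y = y ⬝ᵥ w := dotProduct_comm w y
  have f3 : (0:ℝ) ≤ w ⬝ᵥ w := dot_self_nonneg _
  have f7 : (0:ℝ) ≤ v ⬝ᵥ v := dot_self_nonneg _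
  simp only [dotProduct_add, add_dotProduct, dotProduct_sub,
    sub_dotProduct, dotProduct_smul, smul_dotProduct, smul_eq_mul]
  rw [f2, f4, f5, f6]
  nlinarith [mul_nonneg hb f3, mul_nonneg (mul_nonneg ha hb) (neg_nonneg.mpr f1),
    mul_nonneg (mul_nonneg hb hb) f7]

end main


lemma norm_act_le {m : ℕ} {P : Matrix (Fin m) (Fin m) ℝ}
    (hP : ∀ x : Fin m → ℝ, (P *ᵥ x) ⬝ᵥ (P *ᵥ x) ≤ x ⬝ᵥ x)
    (U : EuclideanSpace ℝ (Fin m)) : ‖act P U‖ ≤ ‖U‖ := by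
  have hact : act P U = (WithLp.equiv 2 (Fin m → ℝ)).symm
      (P *ᵥ ((WithLp.equiv 2 (Fin m → ℝ)) U)) := rfl
  rw [EuclideanSpace.norm_eq, EuclideanSpace.norm_eq]
  apply Real.sqrt_le_sqrt
  have e : ∀ v : Fin m → ℝ, (∑ i, ‖v i‖ ^ 2) = v ⬝ᵥ v := by
    intro v
    simp [dotProduct, Real.norm_eq_abs, sq_abs, pow_two]
  have e1 : (∑ i, ‖act P U i‖ ^ 2)
      = (P *ᵥ ((WithLp.equiv 2 (Fin m → ℝ)) U)) ⬝ᵥ (P *ᵥ ((WithLp.equiv 2 (Fin m → ℝ)) U)) := by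
    rw [hact]; exact e _
  have e2 : (∑ i, ‖U i‖ ^ 2) = ((WithLp.equiv 2 (Fin m → ℝ)) U) ⬝ᵥ ((WithLp.equiv 2 (Fin m → ℝ)) U) :=
    e _
  rw [e1, e2]
  exact hP _


theorem stmt8 (h ΔT ε : ℝ) (hh : 0 < h) (hΔT : 0 < ΔT) (hε : 0 < ε)
    (m : ℕ) (hm : 1 ≤ m) :
    ∀ q : ℕ, ∀ U : EuclideanSpace ℝ (Fin m),
      ‖act (Pmat m h ΔT ε 3 ^ q) U‖ ≤ ‖U‖ := by
  have hdot : ∀ x : Fin m → ℝ,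
      (Pmat m h ΔT ε 3 *ᵥ x) ⬝ᵥ (Pmat m h ΔT ε 3 *ᵥ x) ≤ x ⬝ᵥ x := by
    intro x
    have := key_dot (a := ((3:ℕ):ℝ) * ΔT) (b := ε ^ 2 * ΔT) m h
      (by positivity) (by positivity) x
    simpa [Pmat] using this
  intro q
  induction q with
  | zero =>
    intro U
    simp only [pow_zero]
    rw [show act (1 : Matrix (Fin m) (Fin m) ℝ) U = U by
      simp [act, _root_.map_one]]
  | succ q ih =>
    intro U
    have hmul : act (Pmat m h ΔT ε 3 ^ (q + 1)) U
        = act (Pmat m h ΔT ε 3 ^ q) (act (Pmat m h ΔT ε 3) U) := by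
      rw [pow_succ]
      simp [act, _root_.map_mul]
    rw [hmul]
    exact le_trans (ih _) (norm_act_le hdot U)
end

section
/- (Convergence of PA-II.) Let N ≥ 1 be an integer, u⁰ ∈ ℝ^m, and define the fine solution by U(T_0) = u⁰ and U(T_{n+1}) = P_{J_2}·U(T_n) for 0 ≤ n ≤ N−1. Let (U_n^k)_{0≤n≤N, k≥0} satisfy U_0^k = u⁰ for all k and U_{n+1}^{k+1} = P_2·U_n^{k+1} + (P_{J_2} − P_2)·U_n^k for 0 ≤ n ≤ N−1 and k ≥ 0. Set E_n^k = U(T_n) − U_n^k, α = ‖P_{J_2} − P_2‖ and β = ‖P_2‖ (so β < 1). Then for every k ≥ 0, max_{1≤j≤N} ‖E_j^{k+1}‖ ≤ α^{k+1} · min{ ((1 − β^{N−1})/(1 − β))^{k+1} , C(N−1, k+1) } · max_{1≤j≤N} ‖E_j^0‖, where C(·,·) denotes the binomial coefficient. -/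
open Matrix Finset in
lemma opNorm_le_of_act_eigen {m : ℕ} (M : Matrix (Fin m) (Fin m) ℝ)
    (b : OrthonormalBasis (Fin m) ℝ (EuclideanSpace ℝ (Fin m))) (μ : Fin m → ℝ) (t : ℝ)
    (ht : 0 ≤ t) (hb : ∀ j, act M (b j) = μ j • b j) (hμ : ∀ j, |μ j| ≤ t) :
    opNorm M ≤ t := by
  refine ContinuousLinearMap.opNorm_le_bound _ ht fun x => ?_
  have hx : Matrix.toEuclideanCLM (𝕜 := ℝ) M x = ∑ j, (μ j * b.repr x j) • b j := by
    conv_lhs => rw [← b.sum_repr x]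
    rw [map_sum]
    refine Finset.sum_congr rfl fun j _ => ?_
    rw [_root_.map_smul]
    have : (Matrix.toEuclideanCLM (𝕜 := ℝ) M) (b j) = μ j • b j := hb j
    rw [this, smul_smul, mul_comm]
  have hrep : ∀ i, b.repr (Matrix.toEuclideanCLM (𝕜 := ℝ) M x) i = μ i * b.repr x i := by
    intro i
    rw [b.repr_apply_apply, hx, inner_sum]
    simp only [real_inner_smul_right]
    rw [Finset.sum_eq_single i]
    · rw [orthonormal_iff_ite.mp b.orthonormal]; simp
    · intro j _ hj
      rw [orthonormal_iff_ite.mp b.orthonormal]; simp [hj, Ne.symm hj]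
    · simp
  have h1 : ‖Matrix.toEuclideanCLM (𝕜 := ℝ) M x‖ = ‖b.repr (Matrix.toEuclideanCLM (𝕜 := ℝ) M x)‖ :=
    (b.repr.norm_map _).symm
  have h2 : ‖x‖ = ‖b.repr x‖ := (b.repr.norm_map _).symm
  rw [h1, h2, EuclideanSpace.norm_eq, EuclideanSpace.norm_eq]
  have hsum : ∑ i, ‖b.repr (Matrix.toEuclideanCLM (𝕜 := ℝ) M x) i‖ ^ 2
      ≤ t ^ 2 * ∑ i, ‖b.repr x i‖ ^ 2 := by
    rw [Finset.mul_sum]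
    refine Finset.sum_le_sum fun i _ => ?_
    rw [hrep i]
    have : ‖μ i * b.repr x i‖ ^ 2 = (μ i)^2 * ‖b.repr x i‖^2 := by
      rw [norm_mul, mul_pow]; rw [Real.norm_eq_abs, sq_abs]
    rw [this]
    have : (μ i)^2 ≤ t^2 := by
      have := hμ i
      nlinarith [abs_nonneg (μ i), sq_abs (μ i)]
    nlinarith [sq_nonneg (‖b.repr x i‖)]
  calc Real.sqrt (∑ i, ‖b.repr (Matrix.toEuclideanCLM (𝕜 := ℝ) M x) i‖ ^ 2)
      ≤ Real.sqrt (t ^ 2 * ∑ i, ‖b.repr x i‖ ^ 2) := Real.sqrt_le_sqrt hsum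
    _ = t * Real.sqrt (∑ i, ‖b.repr x i‖ ^ 2) := by
        rw [Real.sqrt_mul (sq_nonneg t), Real.sqrt_sq ht]

open Matrix Finset in
lemma quadform_neg (m : ℕ) (h : ℝ) (hh : 0 < h) (x : Fin m → ℝ) (hx : x ≠ 0) :
    x ⬝ᵥ (Dh m h *ᵥ x) < 0 := by
  have hm : 1 ≤ m := by
    by_contra hc
    apply hx
    funext i
    exact absurd (i.isLt) (by omega)
  set y : ℕ → ℝ := fun n => if hn : n < m then x ⟨n, hn⟩ else 0 with hy
  have hyx : ∀ i : Fin m, y (i : ℕ) = x i := fun i => dif_pos i.isLt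
  have hy0 : ∀ n, m ≤ n → y n = 0 := fun n hn => dif_neg (by omega)
  set A : ℝ := ∑ i ∈ range m, (y i) ^ 2 with hA
  set B : ℝ := ∑ i ∈ range (m - 1), y i * y (i + 1) with hB
  -- inner sums
  have key : ∀ i : Fin m, ∑ j : Fin m, Dh m h i j * x j
      = 1 / h ^ 2 * (-2 * y i + y ((i : ℕ) + 1)
          + (if 1 ≤ (i : ℕ) then y ((i : ℕ) - 1) else 0)) := by
    intro i
    have expand : ∀ j : Fin m, Dh m h i j * x j =
        1 / h ^ 2 * ((if (j : ℕ) = (i : ℕ) then (-2) * x j else 0)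
          + (if (j : ℕ) = (i : ℕ) + 1 then x j else 0)
          + (if (j : ℕ) + 1 = (i : ℕ) then x j else 0)) := by
      intro j
      simp only [Dh, Matrix.of_apply]
      split_ifs <;> (try (exfalso; omega)) <;> ring
    rw [Finset.sum_congr rfl fun j _ => expand j]
    rw [← Finset.mul_sum]
    congr 1
    rw [Finset.sum_add_distrib, Finset.sum_add_distrib]
    have S1 : ∑ j : Fin m, (if (j : ℕ) = (i : ℕ) then (-2) * x j else 0) = -2 * y i := by
      rw [show (∑ j : Fin m, (if (j : ℕ) = (i : ℕ) then (-2) * x j else 0))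
          = ∑ j : Fin m, (if (j : ℕ) = (i : ℕ) then (-2) * y (j : ℕ) else 0) from
        Finset.sum_congr rfl fun j _ => by rw [hyx j]]
      rw [Fin.sum_univ_eq_sum_range (fun n => if n = (i : ℕ) then (-2) * y n else 0) m]
      rw [Finset.sum_ite_eq' (Finset.range m) (i : ℕ) (fun n => (-2) * y n)]
      simp [i.isLt]
    have S2 : ∑ j : Fin m, (if (j : ℕ) = (i : ℕ) + 1 then x j else 0) = y ((i : ℕ) + 1) := by
      rw [show (∑ j : Fin m, (if (j : ℕ) = (i : ℕ) + 1 then x j else 0))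
          = ∑ j : Fin m, (if (j : ℕ) = (i : ℕ) + 1 then y (j : ℕ) else 0) from
        Finset.sum_congr rfl fun j _ => by rw [hyx j]]
      rw [Fin.sum_univ_eq_sum_range (fun n => if n = (i : ℕ) + 1 then y n else 0) m]
      rw [Finset.sum_ite_eq' (Finset.range m) ((i : ℕ) + 1) (fun n => y n)]
      by_cases hc : (i : ℕ) + 1 ∈ Finset.range m
      · simp [hc]
      · rw [if_neg hc]
        rw [hy0 _ (by simpa using hc)]
    have S3 : ∑ j : Fin m, (if (j : ℕ) + 1 = (i : ℕ) then x j else 0)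
        = (if 1 ≤ (i : ℕ) then y ((i : ℕ) - 1) else 0) := by
      rw [show (∑ j : Fin m, (if (j : ℕ) + 1 = (i : ℕ) then x j else 0))
          = ∑ j : Fin m, (if (j : ℕ) + 1 = (i : ℕ) then y (j : ℕ) else 0) from
        Finset.sum_congr rfl fun j _ => by rw [hyx j]]
      rw [Fin.sum_univ_eq_sum_range (fun n => if n + 1 = (i : ℕ) then y n else 0) m]
      by_cases hi : 1 ≤ (i : ℕ)
      · rw [if_pos hi]
        rw [show (∑ n ∈ Finset.range m, if n + 1 = (i : ℕ) then y n else 0)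
            = ∑ n ∈ Finset.range m, if n = (i : ℕ) - 1 then y n else 0 from
          Finset.sum_congr rfl fun n _ => by
            congr 1
            simp only [eq_iff_iff]
            omega]
        rw [Finset.sum_ite_eq' (Finset.range m) ((i : ℕ) - 1) (fun n => y n)]
        have : (i : ℕ) - 1 ∈ Finset.range m := by
          simp only [Finset.mem_range]
          have := i.isLt
          omega
        simp [this]
      · rw [if_neg hi]
        refine Finset.sum_eq_zero fun n _ => ?_
        rw [if_neg (by omega)]
    rw [S1, S2, S3]
  -- total sum
  have total : x ⬝ᵥ (Dh m h *ᵥ x) = 1 / h ^ 2 * (-2 * A + 2 * B) := by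
    have : x ⬝ᵥ (Dh m h *ᵥ x) = ∑ i : Fin m, x i * ∑ j : Fin m, Dh m h i j * x j := by
      simp [dotProduct, Matrix.mulVec, Finset.mul_sum]
    rw [this, Finset.sum_congr rfl fun i _ => by rw [key i, ← hyx i]]
    rw [Fin.sum_univ_eq_sum_range (fun n => y n * (1 / h ^ 2 * (-2 * y n + y (n + 1)
          + (if 1 ≤ n then y (n - 1) else 0)))) m]
    have split : ∀ n, y n * (1 / h ^ 2 * (-2 * y n + y (n + 1)
          + (if 1 ≤ n then y (n - 1) else 0)))
        = 1 / h ^ 2 * ((-2) * (y n)^2 + y n * y (n + 1)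
            + y n * (if 1 ≤ n then y (n - 1) else 0)) := fun n => by ring
    rw [Finset.sum_congr rfl fun n _ => split n, ← Finset.mul_sum]
    congr 1
    rw [Finset.sum_add_distrib, Finset.sum_add_distrib]
    have T1 : ∑ n ∈ Finset.range m, (-2) * (y n)^2 = -2 * A := by
      rw [hA, Finset.mul_sum]
    have T2 : ∑ n ∈ Finset.range m, y n * y (n + 1) = B := by
      obtain ⟨m', rfl⟩ : ∃ m', m = m' + 1 := ⟨m - 1, by omega⟩
      rw [Finset.sum_range_succ, hy0 (m' + 1) (le_refl _), hB]
      simp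
    have T3 : ∑ n ∈ Finset.range m, y n * (if 1 ≤ n then y (n - 1) else 0) = B := by
      obtain ⟨m', rfl⟩ : ∃ m', m = m' + 1 := ⟨m - 1, by omega⟩
      rw [Finset.sum_range_succ']
      simp only [Nat.le_zero, Nat.add_sub_cancel, if_pos (Nat.le_add_left 1 _)]
      rw [hB]
      simp [mul_comm]
    rw [T1, T2, T3]
    ring
  -- the identity
  set S : ℝ := (y 0)^2 + (y (m - 1))^2 + ∑ i ∈ range (m - 1), (y i - y (i + 1))^2 with hS
  have ident : 2 * A - 2 * B = S := by
    have e1 : ∑ i ∈ range (m - 1), (y i)^2 = A - (y (m - 1))^2 := by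
      obtain ⟨m', rfl⟩ : ∃ m', m = m' + 1 := ⟨m - 1, by omega⟩
      rw [hA, Finset.sum_range_succ]
      simp
    have e2 : ∑ i ∈ range (m - 1), (y (i + 1))^2 = A - (y 0)^2 := by
      obtain ⟨m', rfl⟩ : ∃ m', m = m' + 1 := ⟨m - 1, by omega⟩
      rw [hA, Finset.sum_range_succ']
      simp
    have e3 : ∑ i ∈ range (m - 1), (y i - y (i + 1))^2
        = (∑ i ∈ range (m - 1), (y i)^2) + (∑ i ∈ range (m - 1), (y (i + 1))^2) - 2 * B := by
      rw [hB, Finset.mul_sum, ← Finset.sum_add_distrib, ← Finset.sum_sub_distrib]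
      exact Finset.sum_congr rfl fun i _ => by ring
    rw [hS, e3, e1, e2]
    ring
  -- positivity
  have hSnn : 0 < S := by
    have hnn : 0 ≤ S := by
      rw [hS]
      have : 0 ≤ ∑ i ∈ range (m - 1), (y i - y (i + 1))^2 :=
        Finset.sum_nonneg fun i _ => sq_nonneg _
      nlinarith [sq_nonneg (y 0), sq_nonneg (y (m - 1))]
    rcases hnn.lt_or_eq with hlt | heq
    · exact hlt
    · exfalso
      apply hx
      have h0 : (y 0)^2 = 0 ∧ (y (m-1))^2 = 0 ∧
          ∑ i ∈ range (m - 1), (y i - y (i + 1))^2 = 0 := by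
        have hs : 0 ≤ ∑ i ∈ range (m - 1), (y i - y (i + 1))^2 :=
          Finset.sum_nonneg fun i _ => sq_nonneg _
        refine ⟨?_, ?_, ?_⟩ <;> nlinarith [sq_nonneg (y 0), sq_nonneg (y (m - 1))]
      have hterm : ∀ i ∈ range (m - 1), (y i - y (i + 1))^2 = 0 :=
        (Finset.sum_eq_zero_iff_of_nonneg (fun i _ => sq_nonneg _)).mp h0.2.2
      have hzero : ∀ n, n < m → y n = 0 := by
        intro n
        induction n with
        | zero => intro _; exact pow_eq_zero_iff (n := 2) (by norm_num) |>.mp h0.1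
        | succ n ih =>
          intro hn
          have h1 : y n = 0 := ih (by omega)
          have h2 : (y n - y (n + 1))^2 = 0 := hterm n (by simp only [Finset.mem_range]; omega)
          have := pow_eq_zero_iff (n := 2) (by norm_num) |>.mp h2
          linarith
      funext i
      have := hzero i i.isLt
      rw [hyx i] at this
      exact this
  rw [total]
  have h1 : -2 * A + 2 * B = -S := by linarith
  rw [h1]
  have h2 : (0:ℝ) < 1 / h ^ 2 := by positivity
  exact mul_neg_of_pos_of_neg h2 (by linarith)

open Matrix Finset in
lemma Dh_isHermitian (m : ℕ) (h : ℝ) : (Dh m h).IsHermitian := by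
  ext i j
  simp only [Matrix.conjTranspose_apply, Dh, Matrix.of_apply, star_trivial]
  split_ifs <;> first | rfl | omega


open Matrix Finset in
lemma opNorm_Pmat_lt_one (h ΔT ε : ℝ) (hh : 0 < h) (hΔT : 0 < ΔT) (hε : 0 < ε)
    (m : ℕ) (hm : 1 ≤ m) : opNorm (Pmat m h ΔT ε 2) < 1 := by
  have hne : Nonempty (Fin m) := ⟨⟨0, by omega⟩⟩
  set D := Dh m h with hDdef
  have hD : D.IsHermitian := Dh_isHermitian m h
  set b := hD.eigenvectorBasis with hbdef
  set lam := hD.eigenvalues with hlamdef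
  have hbne : ∀ j, (⇑(b j) : Fin m → ℝ) ≠ 0 := by
    intro j hc
    have h1 : ‖b j‖ = 1 := b.orthonormal.1 j
    have h2 : (b j : EuclideanSpace ℝ (Fin m)) = 0 := by
      apply PiLp.ext
      intro i
      exact congrFun hc i
    rw [h2] at h1
    simp at h1
  have hlam : ∀ j, lam j < 0 := by
    intro j
    have he := hD.eigenvalues_eq j
    have : lam j = ⇑(b j) ⬝ᵥ (D *ᵥ ⇑(b j)) := by
      simpa [star_trivial] using he
    rw [this]
    exact quadform_neg m h hh _ (hbne j)
  set A : Matrix (Fin m) (Fin m) ℝ :=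
    (1 : Matrix (Fin m) (Fin m) ℝ) - (((2:ℕ) : ℝ) * ΔT) • D + (ε ^ 2 * ΔT) • D ^ 2 with hAdef
  set B : Matrix (Fin m) (Fin m) ℝ :=
    (1 : Matrix (Fin m) (Fin m) ℝ) - (((2:ℕ) : ℝ) * ΔT) • D with hBdef
  have hPmat : Pmat m h ΔT ε 2 = A⁻¹ * B := rfl
  set g : ℝ → ℝ := fun l => 1 - 2 * ΔT * l + ε ^ 2 * ΔT * l ^ 2 with hgdef
  have hcast : (((2:ℕ) : ℝ)) = (2 : ℝ) := by norm_num
  -- eigen action of A and B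
  have hDv : ∀ j, D *ᵥ ⇑(b j) = lam j • ⇑(b j) := fun j => hD.mulVec_eigenvectorBasis j
  have hD2v : ∀ w : Fin m → ℝ, D ^ 2 *ᵥ w = D *ᵥ (D *ᵥ w) := by
    intro w
    rw [pow_two D, ← Matrix.mulVec_mulVec]
  have hAv : ∀ j, A *ᵥ ⇑(b j) = g (lam j) • ⇑(b j) := by
    intro j
    rw [hAdef]
    rw [Matrix.add_mulVec, Matrix.sub_mulVec, Matrix.one_mulVec,
      Matrix.smul_mulVec, Matrix.smul_mulVec, hD2v,
      hDv j, Matrix.mulVec_smul, hDv j]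
    funext i
    simp only [Pi.add_apply, Pi.sub_apply, Pi.smul_apply, smul_eq_mul, hgdef, hcast]
    ring
  have hBv : ∀ j, B *ᵥ ⇑(b j) = (1 - 2 * ΔT * lam j) • ⇑(b j) := by
    intro j
    rw [hBdef, Matrix.sub_mulVec, Matrix.one_mulVec, Matrix.smul_mulVec, hDv j]
    funext i
    simp only [Pi.sub_apply, Pi.smul_apply, smul_eq_mul, hcast]
    ring
  have hg_pos : ∀ j, 0 < g (lam j) := by
    intro j
    have := hlam j
    have h2 : 0 < (lam j) ^ 2 := pow_two_pos_of_ne_zero (ne_of_lt (hlam j))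
    have h3 : 0 < ε ^ 2 * ΔT := by positivity
    simp only [hgdef]
    nlinarith
  have hnum_pos : ∀ j, 0 < 1 - 2 * ΔT * lam j := by
    intro j; have := hlam j; nlinarith
  -- A invertible
  have hdet : IsUnit A.det := by
    rw [isUnit_iff_ne_zero]
    intro hdet0
    obtain ⟨v, hv0, hAv0⟩ := (Matrix.exists_mulVec_eq_zero_iff).mpr hdet0
    have hDt : Dᵀ = D := by
      ext i j
      simp only [Matrix.transpose_apply, hDdef, Dh, Matrix.of_apply]
      split_ifs <;> first | rfl | omega
    have hexp : v ⬝ᵥ (A *ᵥ v) = v ⬝ᵥ v - (((2:ℕ):ℝ) * ΔT) * (v ⬝ᵥ (D *ᵥ v))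
        + (ε ^ 2 * ΔT) * ((D *ᵥ v) ⬝ᵥ (D *ᵥ v)) := by
      rw [hAdef, Matrix.add_mulVec, Matrix.sub_mulVec, Matrix.one_mulVec,
        Matrix.smul_mulVec, Matrix.smul_mulVec, hD2v,
        dotProduct_add, dotProduct_sub, dotProduct_smul, dotProduct_smul,
        Matrix.dotProduct_mulVec v D (D *ᵥ v), ← Matrix.mulVec_transpose, hDt]
      simp [smul_eq_mul]
    rw [hAv0, dotProduct_zero] at hexp
    have h1 : 0 < v ⬝ᵥ v := by
      have := (Matrix.dotProduct_self_star_pos_iff (v := v))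
      rw [star_trivial] at this
      exact this.mpr hv0
    have h2 : v ⬝ᵥ (D *ᵥ v) < 0 := quadform_neg m h hh v hv0
    have h3 : 0 ≤ (D *ᵥ v) ⬝ᵥ (D *ᵥ v) := by
      have := dotProduct_self_star_nonneg (D *ᵥ v)
      rwa [star_trivial] at this
    rw [hcast] at hexp
    nlinarith [mul_pos hΔT (neg_pos.mpr h2),
      mul_nonneg (mul_nonneg (sq_nonneg ε) hΔT.le) h3]
  have hAinv : A⁻¹ * A = 1 := Matrix.nonsing_inv_mul A hdet
  -- eigen action of P
  set μ : Fin m → ℝ := fun j => (1 - 2 * ΔT * lam j) / g (lam j) with hμdef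
  have hPv : ∀ j, act (A⁻¹ * B) (b j) = μ j • b j := by
    intro j
    have hInv : A⁻¹ *ᵥ ⇑(b j) = (g (lam j))⁻¹ • ⇑(b j) := by
      have h1 : A⁻¹ *ᵥ (A *ᵥ ⇑(b j)) = ⇑(b j) := by
        rw [Matrix.mulVec_mulVec, hAinv, Matrix.one_mulVec]
      rw [hAv j, Matrix.mulVec_smul] at h1
      calc A⁻¹ *ᵥ ⇑(b j) = ((g (lam j))⁻¹ * g (lam j)) • (A⁻¹ *ᵥ ⇑(b j)) := by
            rw [inv_mul_cancel₀ (ne_of_gt (hg_pos j)), one_smul]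
        _ = (g (lam j))⁻¹ • (g (lam j) • (A⁻¹ *ᵥ ⇑(b j))) := by rw [smul_smul]
        _ = (g (lam j))⁻¹ • ⇑(b j) := by rw [h1]
    have : (A⁻¹ * B) *ᵥ ⇑(b j) = μ j • ⇑(b j) := by
      rw [← Matrix.mulVec_mulVec, hBv j, Matrix.mulVec_smul, hInv, smul_smul]
      show _ = ((1 - 2 * ΔT * lam j) / g (lam j)) • _
      rw [div_eq_mul_inv]
    show Matrix.toEuclideanCLM (𝕜 := ℝ) (A⁻¹ * B) (b j) = μ j • b j
    apply WithLp.ofLp_injective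
    rw [Matrix.ofLp_toEuclideanCLM, WithLp.ofLp_smul]
    exact this
  have hμlt : ∀ j, |μ j| < 1 := by
    intro j
    rw [abs_lt]
    constructor
    · have := div_pos (hnum_pos j) (hg_pos j)
      simp only [hμdef] at *
      linarith
    · have h0 : μ j = (1 - 2 * ΔT * lam j) / g (lam j) := rfl
      rw [h0, div_lt_one (hg_pos j)]
      have := hlam j
      have h2 : 0 < (lam j) ^ 2 := pow_two_pos_of_ne_zero (ne_of_lt (hlam j))
      have h3 : 0 < ε ^ 2 * ΔT := by positivity
      simp only [hgdef]
      nlinarith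
  set t : ℝ := Finset.univ.sup' (Finset.univ_nonempty (α := Fin m)) (fun j => |μ j|) with htdef
  have ht0 : 0 ≤ t := by
    obtain ⟨j⟩ := hne
    exact le_trans (abs_nonneg (μ j))
      (Finset.le_sup' (fun j => |μ j|) (Finset.mem_univ j))
  have hoble : opNorm (A⁻¹ * B) ≤ t :=
    opNorm_le_of_act_eigen _ b μ t ht0 hPv
      (fun j => Finset.le_sup' (fun j => |μ j|) (Finset.mem_univ j))
  have ht1 : t < 1 := (Finset.sup'_lt_iff _).mpr (fun j _ => hμlt j)
  rw [hPmat]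
  exact lt_of_le_of_lt hoble ht1

open Matrix Finset in
lemma sum_range_choose_eq (n k : ℕ) :
    ∑ j ∈ Finset.range n, (j.choose k) = n.choose (k + 1) := by
  induction n with
  | zero => simp
  | succ n ih =>
    rw [Finset.sum_range_succ, ih, Nat.choose_succ_succ]
    simp only [Nat.succ_eq_add_one]
    omega


open Matrix Finset in
theorem stmt12 (h ΔT ε : ℝ) (hh : 0 < h) (hΔT : 0 < ΔT) (hε : 0 < ε)
    (m : ℕ) (hm : 1 ≤ m) (J : ℕ) (hJ : 2 ≤ J)
    (N : ℕ) (hN : 1 ≤ N)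
    (u0 : EuclideanSpace ℝ (Fin m))
    (Uf : ℕ → EuclideanSpace ℝ (Fin m)) (U : ℕ → ℕ → EuclideanSpace ℝ (Fin m))
    (hUf0 : Uf 0 = u0)
    (hUfrec : ∀ n < N, Uf (n + 1) = act (PJmat m h ΔT ε J 2) (Uf n))
    (h0 : ∀ k, U 0 k = u0)
    (hrec : ∀ n < N, ∀ k, U (n + 1) (k + 1) =
      act (Pmat m h ΔT ε 2) (U n (k + 1))
        + act (PJmat m h ΔT ε J 2 - Pmat m h ΔT ε 2) (U n k)) :
    ∀ k : ℕ,
      ((Finset.Icc 1 N).sup' (Finset.nonempty_Icc.mpr hN)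
          fun j => ‖Uf j - U j (k + 1)‖) ≤
        opNorm (PJmat m h ΔT ε J 2 - Pmat m h ΔT ε 2) ^ (k + 1) *
          min (((1 - opNorm (Pmat m h ΔT ε 2) ^ (N - 1)) /
                  (1 - opNorm (Pmat m h ΔT ε 2))) ^ (k + 1))
              ((N - 1).choose (k + 1) : ℝ) *
          ((Finset.Icc 1 N).sup' (Finset.nonempty_Icc.mpr hN)
            fun j => ‖Uf j - U j 0‖) := by
  set P := Pmat m h ΔT ε 2 with hPdef
  set Q := PJmat m h ΔT ε J 2 - P with hQdef
  set α := opNorm Q with hαdef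
  set β := opNorm P with hβdef
  have hα0 : 0 ≤ α := norm_nonneg _
  have hβ0 : 0 ≤ β := norm_nonneg _
  have hβ1 : β < 1 := opNorm_Pmat_lt_one h ΔT ε hh hΔT hε m hm
  set E : ℕ → ℕ → EuclideanSpace ℝ (Fin m) := fun n k => Uf n - U n k with hEdef
  have hE0 : ∀ k, E 0 k = 0 := by
    intro k; simp [hEdef, hUf0, h0]
  have hact_le : ∀ (A : Matrix (Fin m) (Fin m) ℝ) (u : EuclideanSpace ℝ (Fin m)),
      ‖act A u‖ ≤ opNorm A * ‖u‖ :=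
    fun A u => (Matrix.toEuclideanCLM (𝕜 := ℝ) A).le_opNorm u
  have hErec : ∀ n < N, ∀ k, ‖E (n + 1) (k + 1)‖ ≤ β * ‖E n (k + 1)‖ + α * ‖E n k‖ := by
    intro n hn k
    have hsplit : E (n + 1) (k + 1) = act P (E n (k + 1)) + act Q (E n k) := by
      have h1 : Uf (n + 1) = act P (Uf n) + act Q (Uf n) := by
        rw [hUfrec n hn]
        have h4 : PJmat m h ΔT ε J 2 = P + Q := by rw [hQdef]; abel
        rw [h4]
        simp [act, map_add, ContinuousLinearMap.add_apply]
      rw [hEdef]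
      simp only
      rw [h1, hrec n hn k]
      have h2 : ∀ u v : EuclideanSpace ℝ (Fin m), act P u - act P v = act P (u - v) := by
        intro u v; simp [act]
      have h3 : ∀ u v : EuclideanSpace ℝ (Fin m), act Q u - act Q v = act Q (u - v) := by
        intro u v; simp [act]
      rw [show act P (Uf n) + act Q (Uf n) - (act P (U n (k + 1)) + act Q (U n k))
          = (act P (Uf n) - act P (U n (k + 1))) + (act Q (Uf n) - act Q (U n k)) by abel,
        h2, h3]
    rw [hsplit]
    calc ‖act P (E n (k + 1)) + act Q (E n k)‖
        ≤ ‖act P (E n (k + 1))‖ + ‖act Q (E n k)‖ := norm_add_le _ _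
      _ ≤ β * ‖E n (k + 1)‖ + α * ‖E n k‖ :=
          add_le_add (hact_le P _) (hact_le Q _)
  -- Claim A
  have claimA : ∀ k n, n ≤ N →
      ‖E n (k + 1)‖ ≤ α * ∑ i ∈ Finset.range n, β ^ (n - 1 - i) * ‖E i k‖ := by
    intro k n
    induction n with
    | zero => intro _; simp [hE0]
    | succ n ih =>
      intro hn
      have hn' : n < N := by omega
      calc ‖E (n + 1) (k + 1)‖ ≤ β * ‖E n (k + 1)‖ + α * ‖E n k‖ := hErec n hn' k
        _ ≤ β * (α * ∑ i ∈ Finset.range n, β ^ (n - 1 - i) * ‖E i k‖) + α * ‖E n k‖ := by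
            exact add_le_add_left (mul_le_mul_of_nonneg_left (ih (by omega)) hβ0) _
        _ = α * ∑ i ∈ Finset.range (n + 1), β ^ (n + 1 - 1 - i) * ‖E i k‖ := by
            rw [Finset.sum_range_succ]
            have hlast : β ^ (n + 1 - 1 - n) * ‖E n k‖ = ‖E n k‖ := by
              have : n + 1 - 1 - n = 0 := by omega
              rw [this, pow_zero, one_mul]
            rw [hlast]
            rw [show (∑ i ∈ Finset.range n, β ^ (n + 1 - 1 - i) * ‖E i k‖)
                = ∑ i ∈ Finset.range n, β * (β ^ (n - 1 - i) * ‖E i k‖) from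
              Finset.sum_congr rfl fun i hi => by
                have hi' : i < n := Finset.mem_range.mp hi
                have : n + 1 - 1 - i = (n - 1 - i) + 1 := by omega
                rw [this, pow_succ]
                ring]
            rw [← Finset.mul_sum]
            ring
  set ne1 : (Finset.Icc 1 N).Nonempty := Finset.nonempty_Icc.mpr hN with hne1
  set M : ℕ → ℝ := fun k => (Finset.Icc 1 N).sup' ne1 fun j => ‖Uf j - U j k‖ with hMdef
  have hEM : ∀ k j, 1 ≤ j → j ≤ N → ‖E j k‖ ≤ M k := by
    intro k j h1 h2
    exact Finset.le_sup' (fun j => ‖Uf j - U j k‖) (Finset.mem_Icc.mpr ⟨h1, h2⟩)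
  have hM0 : ∀ k, 0 ≤ M k := by
    intro k
    exact le_trans (norm_nonneg (E 1 k)) (hEM k 1 le_rfl hN)
  set G : ℝ := ∑ i ∈ Finset.range (N - 1), β ^ i with hGdef
  have hG0 : 0 ≤ G := Finset.sum_nonneg fun i _ => pow_nonneg hβ0 _
  -- geometric per-step bound
  have claimG : ∀ k n, 1 ≤ n → n ≤ N → ‖E n (k + 1)‖ ≤ α * G * M k := by
    intro k n h1 h2
    obtain ⟨n', rfl⟩ : ∃ n', n = n' + 1 := ⟨n - 1, by omega⟩
    calc ‖E (n' + 1) (k + 1)‖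
        ≤ α * ∑ i ∈ Finset.range (n' + 1), β ^ (n' + 1 - 1 - i) * ‖E i k‖ := claimA k _ h2
      _ = α * (∑ i ∈ Finset.range n', β ^ (n' + 1 - 1 - (i + 1)) * ‖E (i + 1) k‖
            + β ^ (n' + 1 - 1 - 0) * ‖E 0 k‖) := by rw [Finset.sum_range_succ']
      _ = α * ∑ i ∈ Finset.range n', β ^ (n' - 1 - i) * ‖E (i + 1) k‖ := by
            rw [hE0, norm_zero, mul_zero, add_zero]
            congr 1
            refine Finset.sum_congr rfl fun i hi => ?_
            have : n' + 1 - 1 - (i + 1) = n' - 1 - i := by omega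
            rw [this]
      _ ≤ α * ∑ i ∈ Finset.range n', β ^ (n' - 1 - i) * M k := by
            refine mul_le_mul_of_nonneg_left (Finset.sum_le_sum fun i hi => ?_) hα0
            have hi' : i < n' := Finset.mem_range.mp hi
            exact mul_le_mul_of_nonneg_left
              (hEM k (i + 1) (by omega) (by omega)) (pow_nonneg hβ0 _)
      _ = α * ((∑ i ∈ Finset.range n', β ^ (n' - 1 - i)) * M k) := by
            rw [Finset.sum_mul]
      _ ≤ α * (G * M k) := by
            refine mul_le_mul_of_nonneg_left (mul_le_mul_of_nonneg_right ?_ (hM0 k)) hα0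
            rw [show (∑ i ∈ Finset.range n', β ^ (n' - 1 - i))
                = ∑ i ∈ Finset.range n', β ^ i from Finset.sum_range_reflect _ _]
            refine Finset.sum_le_sum_of_subset_of_nonneg ?_ fun i _ _ => pow_nonneg hβ0 _
            exact Finset.range_subset_range.mpr (by omega)
      _ = α * G * M k := by ring
  have boundG : ∀ k, M (k + 1) ≤ α * G * M k := by
    intro k
    refine Finset.sup'_le _ _ fun j hj => ?_
    obtain ⟨h1, h2⟩ := Finset.mem_Icc.mp hj
    exact claimG k j h1 h2
  have boundGk : ∀ k, M k ≤ (α * G) ^ k * M 0 := by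
    intro k
    induction k with
    | zero => simp
    | succ k ih =>
      calc M (k + 1) ≤ α * G * M k := boundG k
        _ ≤ α * G * ((α * G) ^ k * M 0) :=
            mul_le_mul_of_nonneg_left ih (mul_nonneg hα0 hG0)
        _ = (α * G) ^ (k + 1) * M 0 := by ring
  -- binomial bound
  have claimB : ∀ k n, 1 ≤ n → n ≤ N → ‖E n k‖ ≤ α ^ k * ((n - 1).choose k : ℝ) * M 0 := by
    intro k
    induction k with
    | zero =>
      intro n h1 h2
      simp only [pow_zero, Nat.choose_zero_right, Nat.cast_one, one_mul]
      exact hEM 0 n h1 h2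
    | succ k ih =>
      intro n h1 h2
      obtain ⟨n', rfl⟩ : ∃ n', n = n' + 1 := ⟨n - 1, by omega⟩
      calc ‖E (n' + 1) (k + 1)‖
          ≤ α * ∑ i ∈ Finset.range (n' + 1), β ^ (n' + 1 - 1 - i) * ‖E i k‖ := claimA k _ h2
        _ = α * (∑ i ∈ Finset.range n', β ^ (n' + 1 - 1 - (i + 1)) * ‖E (i + 1) k‖
              + β ^ (n' + 1 - 1 - 0) * ‖E 0 k‖) := by rw [Finset.sum_range_succ']
        _ = α * ∑ i ∈ Finset.range n', β ^ (n' - 1 - i) * ‖E (i + 1) k‖ := by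
              rw [hE0, norm_zero, mul_zero, add_zero]
              congr 1
              refine Finset.sum_congr rfl fun i hi => ?_
              have : n' + 1 - 1 - (i + 1) = n' - 1 - i := by omega
              rw [this]
        _ ≤ α * ∑ i ∈ Finset.range n', α ^ k * ((i.choose k : ℝ)) * M 0 := by
              refine mul_le_mul_of_nonneg_left (Finset.sum_le_sum fun i hi => ?_) hα0
              have hi' : i < n' := Finset.mem_range.mp hi
              have hterm := ih (i + 1) (by omega) (by omega)
              simp only [Nat.add_sub_cancel] at hterm
              calc β ^ (n' - 1 - i) * ‖E (i + 1) k‖ ≤ 1 * ‖E (i + 1) k‖ := by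
                    refine mul_le_mul_of_nonneg_right ?_ (norm_nonneg _)
                    exact pow_le_one₀ hβ0 hβ1.le
                _ = ‖E (i + 1) k‖ := one_mul _
                _ ≤ α ^ k * ((i.choose k : ℝ)) * M 0 := hterm
        _ = α ^ (k + 1) * ((∑ i ∈ Finset.range n', (i.choose k : ℝ))) * M 0 := by
              rw [← Finset.sum_mul, ← Finset.mul_sum]
              ring
        _ = α ^ (k + 1) * ((n'.choose (k + 1) : ℝ)) * M 0 := by
              rw [show (∑ i ∈ Finset.range n', (i.choose k : ℝ))
                  = ((∑ i ∈ Finset.range n', i.choose k : ℕ) : ℝ) by push_cast; ring,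
                sum_range_choose_eq]
        _ = α ^ (k + 1) * (((n' + 1 - 1).choose (k + 1) : ℝ)) * M 0 := by
              norm_num
  have boundB : ∀ k, M (k + 1) ≤ α ^ (k + 1) * ((N - 1).choose (k + 1) : ℝ) * M 0 := by
    intro k
    refine Finset.sup'_le _ _ fun j hj => ?_
    obtain ⟨h1, h2⟩ := Finset.mem_Icc.mp hj
    calc ‖E j (k + 1)‖ ≤ α ^ (k + 1) * ((j - 1).choose (k + 1) : ℝ) * M 0 := claimB (k + 1) j h1 h2
      _ ≤ α ^ (k + 1) * ((N - 1).choose (k + 1) : ℝ) * M 0 := by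
          refine mul_le_mul_of_nonneg_right (mul_le_mul_of_nonneg_left ?_ (pow_nonneg hα0 _))
            (hM0 0)
          exact_mod_cast Nat.cast_le.mpr (Nat.choose_le_choose (k + 1) (by omega : j - 1 ≤ N - 1))
  -- conclude
  intro k
  have hGval : (1 - β ^ (N - 1)) / (1 - β) = G := by
    rw [hGdef, geom_sum_eq (ne_of_lt hβ1)]
    rw [← neg_sub (1:ℝ) (β ^ (N - 1)), ← neg_sub (1:ℝ) β, neg_div_neg_eq]
  show M (k + 1) ≤ α ^ (k + 1) * min (((1 - β ^ (N - 1)) / (1 - β)) ^ (k + 1))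
      ((N - 1).choose (k + 1) : ℝ) * M 0
  rw [hGval]
  rcases le_total (G ^ (k + 1)) (((N - 1).choose (k + 1) : ℝ)) with hc | hc
  · rw [min_eq_left hc]
    calc M (k + 1) ≤ (α * G) ^ (k + 1) * M 0 := boundGk (k + 1)
      _ = α ^ (k + 1) * G ^ (k + 1) * M 0 := by rw [mul_pow]
  · rw [min_eq_right hc]
    exact boundB k
end
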